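/- Let ν > 0, let u_{ν₁} and u_{ν₂} be kernels with ∫_0^∞ e^{-μx} u_{ν_i}(t,x) dx = e^{-μ^{ν_i} t}. Then the stochastic composition kernel w(t,x) = ∫_0^∞ u_{ν₁}(s,x) u_{ν₂}(t,s) ds satisfies ∫_0^∞ e^{-μx} w(t,x) dx = e^{-μ^{ν₁ν₂} t} for all μ, t ≥ 0. In other words, S_{ν₁}(S_{ν₂}(t)) is equal in distribution to S_{ν₁ν₂}(t). -/
import Mathlib


open MeasureTheory Set

theorem composition_of_stable_pseudo_subordinators
    (ν₁ ν₂ : ℝ) (hν₁ : 0 < ν₁) (hν₂ : 0 < ν₂)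
    (u₁ u₂ : ℝ → ℝ → ℝ)
    (hmeas₁ : Measurable (Function.uncurry u₁)) (hmeas₂ : Measurable (Function.uncurry u₂))
    (hker₁ : ∀ μ : ℝ, 0 ≤ μ → ∀ t : ℝ, 0 ≤ t →
      ∫ x in Ioi (0:ℝ), Real.exp (-μ * x) * u₁ t x = Real.exp (-(μ ^ ν₁) * t))
    (hker₂ : ∀ μ : ℝ, 0 ≤ μ → ∀ t : ℝ, 0 ≤ t →
      ∫ x in Ioi (0:ℝ), Real.exp (-μ * x) * u₂ t x = Real.exp (-(μ ^ ν₂) * t))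
    (hFub : ∀ μ : ℝ, 0 ≤ μ → ∀ t : ℝ, 0 ≤ t →
      IntegrableOn (fun p : ℝ × ℝ => Real.exp (-μ * p.2) * u₁ p.1 p.2 * u₂ t p.1)
        ((Ioi (0:ℝ)) ×ˢ (Ioi (0:ℝ)))) :
    ∀ μ : ℝ, 0 ≤ μ → ∀ t : ℝ, 0 ≤ t →
      ∫ x in Ioi (0:ℝ), Real.exp (-μ * x) * ∫ s in Ioi (0:ℝ), u₁ s x * u₂ t s =
        Real.exp (-(μ ^ (ν₁ * ν₂)) * t) := by
  intro μ hμ t ht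
  have hf : Integrable (Function.uncurry fun s x => Real.exp (-μ * x) * u₁ s x * u₂ t s)
      ((volume.restrict (Ioi (0:ℝ))).prod (volume.restrict (Ioi (0:ℝ)))) := by
    rw [Measure.prod_restrict]
    exact hFub μ hμ t ht
  have hswap := integral_integral_swap hf
  have step1 : (∫ x in Ioi (0:ℝ), Real.exp (-μ * x) * ∫ s in Ioi (0:ℝ), u₁ s x * u₂ t s)
      = ∫ x in Ioi (0:ℝ), ∫ s in Ioi (0:ℝ), Real.exp (-μ * x) * u₁ s x * u₂ t s := by
    refine integral_congr_ae (Filter.Eventually.of_forall fun x => ?_)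
    dsimp only
    rw [← integral_const_mul]
    exact integral_congr_ae (Filter.Eventually.of_forall fun s => by ring)
  rw [step1, ← hswap]
  have step2 : (∫ s in Ioi (0:ℝ), ∫ x in Ioi (0:ℝ), Real.exp (-μ * x) * u₁ s x * u₂ t s)
      = ∫ s in Ioi (0:ℝ), Real.exp (-(μ ^ ν₁) * s) * u₂ t s := by
    refine setIntegral_congr_ae measurableSet_Ioi
      (Filter.Eventually.of_forall fun s hs => ?_)
    rw [← hker₁ μ hμ s (le_of_lt hs), ← integral_mul_const]
  rw [step2, hker₂ (μ ^ ν₁) (Real.rpow_nonneg hμ ν₁) t ht, Real.rpow_mul hμ]
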